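/- Let g : ℂ → ℂ be analytic at p ∈ ℂ with g(p) ≠ 0, let β be a positive natural number, and define W(s) = g(s)/(s−p)^β, so that W has a pole of order β at p. Then for any two real angles θ₁, θ₂, the quotient W(p + r·e^{iθ₁}) / W(p + r·e^{iθ₂}) tends to e^{iβ(θ₂−θ₁)} as the real number r tends to 0 from above. (This is the limiting form of the paper's Theorem 1.16 and Theorem 1.20: the phase of W along a ray of inclination θ emanating from a pole of order β differs between two rays by β(θ₂−θ₁), so the degree of the root locus originating from a pole strictly and monotonously increases clockwise in the angle of origination.) -/

import Mathlib

open Filter Topology Complex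

/-- Limiting form of the paper's Theorems 1.16 and 1.20: for `W s = g s / (s - p) ^ β`
with a pole of order `β` at `p`, the quotient of values of `W` along two rays of
inclinations `θ₁`, `θ₂` emanating from `p` tends to `exp (i β (θ₂ - θ₁))` as the
radius `r` tends to `0` from above. -/
theorem pole_ray_phase_difference (g : ℂ → ℂ) (p : ℂ) (hg : AnalyticAt ℂ g p)
    (hgp : g p ≠ 0) (β : ℕ) (hβ : 0 < β) (W : ℂ → ℂ)
    (hW : ∀ s, W s = g s / (s - p) ^ β) (θ₁ θ₂ : ℝ) :
    Tendsto (fun r : ℝ =>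
        W (p + r * Complex.exp (θ₁ * Complex.I)) / W (p + r * Complex.exp (θ₂ * Complex.I)))
      (𝓝[>] 0) (𝓝 (Complex.exp ((β : ℂ) * ((θ₂ : ℂ) - θ₁) * Complex.I))) := by
  have hgc : ContinuousAt g p := hg.continuousAt
  -- auxiliary: ray functions tend to p
  have hray : ∀ θ : ℝ, Tendsto (fun r : ℝ => p + r * Complex.exp (θ * Complex.I))
      (𝓝[>] 0) (𝓝 p) := by
    intro θ
    have hc : Continuous (fun r : ℝ => p + (r : ℂ) * Complex.exp ((θ : ℂ) * Complex.I)) :=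
      continuous_const.add (Complex.continuous_ofReal.mul continuous_const)
    have := hc.tendsto (0:ℝ)
    simp only [Complex.ofReal_zero, zero_mul, add_zero] at this
    exact this.mono_left nhdsWithin_le_nhds
  have hne : ∀ᶠ z in 𝓝 p, g z ≠ 0 := hgc.eventually_ne hgp
  -- the g-ratio tends to g p / g p = 1
  have h1 : Tendsto (fun r : ℝ => g (p + r * Complex.exp (θ₁ * Complex.I)) /
      g (p + r * Complex.exp (θ₂ * Complex.I))) (𝓝[>] 0) (𝓝 1) := by
    have := ((hgc.tendsto.comp (hray θ₁)).div (hgc.tendsto.comp (hray θ₂)) hgp)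
    simpa [div_self hgp, Function.comp, Pi.div_def, Function.comp_def] using this
  have h2 : Tendsto (fun r : ℝ => (g (p + r * Complex.exp (θ₁ * Complex.I)) /
      g (p + r * Complex.exp (θ₂ * Complex.I))) *
      Complex.exp ((β : ℂ) * ((θ₂ : ℂ) - θ₁) * Complex.I)) (𝓝[>] 0)
      (𝓝 (Complex.exp ((β : ℂ) * ((θ₂ : ℂ) - θ₁) * Complex.I))) := by
    simpa using h1.mul_const (Complex.exp ((β : ℂ) * ((θ₂ : ℂ) - θ₁) * Complex.I))
  refine Tendsto.congr' ?_ h2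
  have e1 : ∀ᶠ r : ℝ in 𝓝[>] 0, g (p + r * Complex.exp (θ₁ * Complex.I)) ≠ 0 :=
    (hray θ₁).eventually hne
  have e2 : ∀ᶠ r : ℝ in 𝓝[>] 0, g (p + r * Complex.exp (θ₂ * Complex.I)) ≠ 0 :=
    (hray θ₂).eventually hne
  filter_upwards [e1, e2, self_mem_nhdsWithin] with r hr1 hr2 hr
  have hrne : (r : ℂ) ≠ 0 := by
    exact_mod_cast ne_of_gt (hr : (0:ℝ) < r)
  have hexp : ∀ θ : ℝ, Complex.exp ((θ : ℂ) * Complex.I) ≠ 0 := fun θ => Complex.exp_ne_zero _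
  rw [hW, hW]
  have hsub : ∀ θ : ℝ, (p + r * Complex.exp (θ * Complex.I)) - p
      = r * Complex.exp (θ * Complex.I) := by intro θ; ring
  rw [hsub θ₁, hsub θ₂]
  have hEkey : Complex.exp ((β : ℂ) * ((θ₂ : ℂ) - θ₁) * Complex.I)
      = Complex.exp ((θ₂ : ℂ) * Complex.I) ^ β / Complex.exp ((θ₁ : ℂ) * Complex.I) ^ β := by
    rw [← Complex.exp_nat_mul, ← Complex.exp_nat_mul, ← Complex.exp_sub]
    ring_nf
  rw [hEkey]
  field_simp [mul_pow, pow_ne_zero, hrne, hexp]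
  ring
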